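/- For all integers n ≥ 2 and p > q ≥ 1 with p ≡ q (mod 2), the fractal cube FC⁽ⁿ⁾(p,q) ⊆ ℝⁿ is a connected set. (In particular the fractal geometry supports connected macroscopic logical strings.) -/

import Mathlib

open Set

/-- The digit set `D` of the fractal cube construction: tuples `a ∈ {0,…,p−1}ⁿ` that do
not lie in the central block `{m,…,m+q−1}ⁿ`, where `m = (p−q)/2`. -/
def digitSet (n p q : ℕ) : Set (Fin n → ℕ) :=
  {a | (∀ i, a i < p) ∧ ¬ ∀ i, (p - q) / 2 ≤ a i ∧ a i ≤ (p - q) / 2 + q - 1}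

/-- The contracting similarity `x ↦ (x + a) / p` of `ℝⁿ`. -/
noncomputable def simMap (n p : ℕ) (a : Fin n → ℕ) (x : EuclideanSpace ℝ (Fin n)) :
    EuclideanSpace ℝ (Fin n) :=
  WithLp.toLp 2 (fun i => (x i + a i) / p)

/-- The level-`l` regions `Ωₗ` of the fractal cube construction:
`Ω₀ = [0,1]ⁿ` and `Ω_{l+1} = ⋃_{a ∈ D} p⁻¹ · (a + Ωₗ)`. -/
noncomputable def levelRegion (n p q : ℕ) : ℕ → Set (EuclideanSpace ℝ (Fin n))
  | 0 => {x | ∀ i, x i ∈ Icc (0 : ℝ) 1}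
  | l + 1 => ⋃ a ∈ digitSet n p q, simMap n p a '' levelRegion n p q l

/-- The fractal cube `FC⁽ⁿ⁾(p,q) = ⋂_l Ωₗ`. -/
noncomputable def fractalCube (n p q : ℕ) : Set (EuclideanSpace ℝ (Fin n)) :=
  ⋂ l, levelRegion n p q l

/-! ### Auxiliary lemmas -/

section Aux

open Relation

variable {n p q : ℕ}

lemma FC.simMap_continuous (n p : ℕ) (a : Fin n → ℕ) : Continuous (simMap n p a) :=
  (PiLp.continuous_toLp 2 _).comp
    (continuous_pi fun i => ((PiLp.continuous_apply 2 _ i).add continuous_const).div_const _)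

/-- Every level region is contained in the unit cube. -/
lemma FC.levelRegion_subset_cube (hpq : q < p) :
    ∀ l, ∀ x ∈ levelRegion n p q l, ∀ i, x i ∈ Icc (0 : ℝ) 1 := by
  intro l
  induction l with
  | zero => intro x hx; exact hx
  | succ l ih =>
    intro x hx i
    simp only [levelRegion, mem_iUnion] at hx
    obtain ⟨a, ha, y, hy, rfl⟩ := hx
    have h1 := ih y hy i
    have h2 : a i < p := ha.1 i
    have hpR : (0 : ℝ) < p := by exact_mod_cast (by omega : 0 < p)
    have haR : (a i : ℝ) + 1 ≤ p := by exact_mod_cast h2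
    constructor
    · have : (0 : ℝ) ≤ y i + a i := by
        have := h1.1; positivity
      exact div_nonneg this hpR.le
    · show (y i + a i) / p ≤ 1
      rw [div_le_one hpR]
      have := h1.2
      linarith

/-- Level regions are nested. -/
lemma FC.levelRegion_succ_subset (hpq : q < p) :
    ∀ l, levelRegion n p q (l + 1) ⊆ levelRegion n p q l := by
  intro l
  induction l with
  | zero =>
    intro x hx
    exact FC.levelRegion_subset_cube hpq 1 x hx
  | succ l ih =>
    intro x hx
    simp only [levelRegion, mem_iUnion] at hx ⊢
    obtain ⟨a, ha, y, hy, rfl⟩ := hx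
    exact ⟨a, ha, y, ih hy, rfl⟩

lemma FC.digitSet_finite : (digitSet n p q).Finite := by
  have : digitSet n p q ⊆ Set.pi Set.univ (fun _ : Fin n => Set.Iio p) := by
    intro a ha i _
    exact ha.1 i
  exact (Set.Finite.pi fun _ => Set.finite_Iio p).subset this

/-- Each level region is compact. -/
lemma FC.levelRegion_isCompact : ∀ l, IsCompact (levelRegion n p q l) := by
  intro l
  induction l with
  | zero =>
    have h : levelRegion n p q 0
        = (EuclideanSpace.equiv (Fin n) ℝ) ⁻¹' (univ.pi fun _ => Icc (0 : ℝ) 1) := by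
      ext x; simp only [levelRegion, mem_setOf_eq, mem_preimage, mem_univ_pi]; rfl
    rw [h]
    exact ((EuclideanSpace.equiv (Fin n) ℝ).toHomeomorph.isCompact_preimage).2
      (isCompact_univ_pi fun _ => isCompact_Icc)
  | succ l ih =>
    simp only [levelRegion]
    exact FC.digitSet_finite.isCompact_biUnion fun a _ =>
      ih.image (FC.simMap_continuous n p a)

/-- Corner points (all coordinates `0` or `1`) belong to every level region. -/
lemma FC.corner_mem_levelRegion (hn : 2 ≤ n) (hq : 1 ≤ q) (hpq : q < p) (hmod : p % 2 = q % 2) :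
    ∀ l, ∀ x : EuclideanSpace ℝ (Fin n), (∀ i, x i = 0 ∨ x i = 1) →
      x ∈ levelRegion n p q l := by
  have hm : 1 ≤ (p - q) / 2 := by omega
  have hp1 : 1 ≤ p := by omega
  intro l
  induction l with
  | zero =>
    intro x hx i
    rcases hx i with h | h <;> rw [h] <;> constructor <;> norm_num
  | succ l ih =>
    intro x hx
    classical
    set a : Fin n → ℕ := fun i => if x i = 0 then 0 else p - 1 with ha_def
    have haval : ∀ i, a i = if x i = 0 then 0 else p - 1 := fun i => rfl
    have haD : a ∈ digitSet n p q := by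
      constructor
      · intro i
        rw [haval i]
        split_ifs <;> omega
      · intro hall
        have h0 := hall ⟨0, by omega⟩
        rw [haval ⟨0, by omega⟩] at h0
        split_ifs at h0 <;> omega
    have hmap : simMap n p a x = x := by
      ext i
      show (x i + a i) / p = x i
      rw [haval i]
      rcases hx i with h | h
      · rw [if_pos h, h]
        simp
      · have hne : x i ≠ 0 := by rw [h]; norm_num
        have hcast : ((p - 1 : ℕ) : ℝ) = (p : ℝ) - 1 := by
          push_cast [Nat.cast_sub hp1]; ring
        have hpR : (p : ℝ) ≠ 0 := by positivity
        rw [if_neg hne, h, hcast]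
        field_simp
        ring
    simp only [levelRegion]
    exact mem_biUnion haD ⟨x, ih x hx, hmap⟩

/-- The zero digit is in the digit set. -/
lemma FC.zero_mem_digitSet (hn : 2 ≤ n) (hq : 1 ≤ q) (hpq : q < p) (hmod : p % 2 = q % 2) :
    (fun _ => 0 : Fin n → ℕ) ∈ digitSet n p q := by
  constructor
  · intro i; show 0 < p; omega
  · intro hall
    have h : (p - q) / 2 ≤ 0 ∧ 0 ≤ (p - q) / 2 + q - 1 := hall ⟨0, by omega⟩
    omega

/-- Adjacency of digits: one is obtained from the other by incrementing one coordinate. -/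
def FC.adj (n p q : ℕ) (a b : Fin n → ℕ) : Prop :=
  a ∈ digitSet n p q ∧ b ∈ digitSet n p q ∧
    ∃ j, b = Function.update a j (a j + 1) ∨ a = Function.update b j (b j + 1)

lemma FC.adj_symm : Symmetric (FC.adj n p q) := by
  rintro a b ⟨ha, hb, j, h⟩
  exact ⟨hb, ha, j, h.symm⟩

/-- A nonzero digit can always be decremented somewhere while staying in the digit set. -/
lemma FC.decrement (hn : 2 ≤ n) (hq : 1 ≤ q) (hpq : q < p) (hmod : p % 2 = q % 2)
    {a : Fin n → ℕ} (ha : a ∈ digitSet n p q) (hne : ∃ i, a i ≠ 0) :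
    ∃ i, a i ≠ 0 ∧ Function.update a i (a i - 1) ∈ digitSet n p q := by
  classical
  obtain ⟨hlt, hblock⟩ := ha
  push_neg at hblock
  obtain ⟨j, hj⟩ := hblock
  have hj' : a j < (p - q) / 2 ∨ (p - q) / 2 + q - 1 < a j := by omega
  have hupd_lt : ∀ i : Fin n, ∀ k : Fin n, Function.update a i (a i - 1) k < p := by
    intro i k
    rw [Function.update_apply]
    split_ifs with h
    · have := hlt i; omega
    · exact hlt k
  rcases hj' with hlow | hhigh
  · obtain ⟨i, hi⟩ := hne
    refine ⟨i, hi, hupd_lt i, ?_⟩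
    intro hall
    have h := hall j
    rw [Function.update_apply] at h
    split_ifs at h with hji
    · subst hji; omega
    · omega
  · by_cases hex : ∃ i, i ≠ j ∧ a i ≠ 0
    · obtain ⟨i, hij, hi⟩ := hex
      refine ⟨i, hi, hupd_lt i, ?_⟩
      intro hall
      have h := hall j
      rw [Function.update_apply] at h
      split_ifs at h with hji
      · exact hij hji.symm
      · omega
    · push_neg at hex
      have haj : a j ≠ 0 := by
        obtain ⟨i, hi⟩ := hne
        by_cases h : i = j
        · rwa [h] at hi
        · exact absurd (hex i h) hi
      refine ⟨j, haj, hupd_lt j, ?_⟩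
      intro hall
      -- pick an index different from j
      have hex2 : ∃ i : Fin n, i ≠ j := by
        rcases eq_or_ne j ⟨0, by omega⟩ with h | h
        · refine ⟨⟨1, by omega⟩, ?_⟩
          rw [h]
          intro hc
          simpa using congrArg Fin.val hc
        · exact ⟨⟨0, by omega⟩, fun hc => h hc.symm⟩
      obtain ⟨i0, hi0⟩ := hex2
      have h := hall i0
      rw [Function.update_apply] at h
      split_ifs at h with hji
      · exact hi0 hji
      · have := hex i0 hi0
        omega

/-- Every digit is connected to the zero digit in the adjacency graph. -/
lemma FC.chain_to_zero (hn : 2 ≤ n) (hq : 1 ≤ q) (hpq : q < p) (hmod : p % 2 = q % 2) :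
    ∀ N : ℕ, ∀ a : Fin n → ℕ, (∑ i, a i) ≤ N → a ∈ digitSet n p q →
      ReflTransGen (FC.adj n p q) a (fun _ => 0) := by
  intro N
  induction N with
  | zero =>
    intro a hsum ha
    have : a = fun _ => 0 := by
      funext i
      have := Finset.single_le_sum (f := a) (fun i _ => Nat.zero_le _) (Finset.mem_univ i)
      omega
    rw [this]
  | succ N ih =>
    intro a hsum ha
    by_cases hz : ∀ i, a i = 0
    · have : a = fun _ => 0 := funext fun i => hz i
      rw [this]
    · push_neg at hz
      obtain ⟨i, hi, hb⟩ := FC.decrement hn hq hpq hmod ha hz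
      have hupd : Function.update (Function.update a i (a i - 1)) i
          ((Function.update a i (a i - 1)) i + 1) = a := by
        funext k
        rcases eq_or_ne k i with rfl | h
        · simp only [Function.update_self]
          omega
        · simp only [Function.update_of_ne h]
      have hadj : FC.adj n p q a (Function.update a i (a i - 1)) :=
        ⟨ha, hb, i, Or.inr hupd.symm⟩
      have hsum' : (∑ k, Function.update a i (a i - 1) k) ≤ N := by
        have h1 : (∑ k, Function.update a i (a i - 1) k)
            = (a i - 1) + ∑ k ∈ Finset.univ \ {i}, a k := by
          rw [Finset.sum_update_of_mem (Finset.mem_univ i)]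
        have h2 : (∑ k, a k) = a i + ∑ k ∈ Finset.univ \ {i}, a k := by
          rw [← Finset.erase_eq, Finset.add_sum_erase _ a (Finset.mem_univ i)]
        omega
      exact ReflTransGen.head hadj (ih _ hsum' hb)

/-- Adjacent digits yield intersecting pieces. -/
lemma FC.adj_inter (hn : 2 ≤ n) (hq : 1 ≤ q) (hpq : q < p) (hmod : p % 2 = q % 2)
    (l : ℕ) {a b : Fin n → ℕ} (h : FC.adj n p q a b) :
    (simMap n p a '' levelRegion n p q l ∩ simMap n p b '' levelRegion n p q l).Nonempty := by
  classical
  obtain ⟨ha, hb, j, hor⟩ := h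
  have key : ∀ c d : Fin n → ℕ, d = Function.update c j (c j + 1) →
      (simMap n p c '' levelRegion n p q l ∩ simMap n p d '' levelRegion n p q l).Nonempty := by
    intro c d hd
    have heΩ : (WithLp.toLp 2 (fun i => if i = j then (1 : ℝ) else 0) : EuclideanSpace ℝ (Fin n))
        ∈ levelRegion n p q l := by
      apply FC.corner_mem_levelRegion hn hq hpq hmod
      intro i
      by_cases h : i = j
      · right; simp [h]
      · left; simp [h]
    have hzΩ : (WithLp.toLp 2 (fun _ => (0 : ℝ)) : EuclideanSpace ℝ (Fin n)) ∈ levelRegion n p q l := by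
      apply FC.corner_mem_levelRegion hn hq hpq hmod
      intro i; left; rfl
    refine ⟨simMap n p c (WithLp.toLp 2 (fun i => if i = j then (1 : ℝ) else 0)),
      ⟨_, heΩ, rfl⟩, ⟨WithLp.toLp 2 (fun _ => 0), hzΩ, ?_⟩⟩
    ext i
    show ((0 : ℝ) + d i) / p = ((if i = j then (1 : ℝ) else 0) + c i) / p
    rw [hd, Function.update_apply]
    by_cases h : i = j
    · rw [if_pos h, if_pos h, h]
      push_cast
      ring_nf
    · rw [if_neg h, if_neg h]
  rcases hor with h | h
  · exact key a b h
  · rw [Set.inter_comm]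
    exact key b a h

/-- Each level region is connected. -/
lemma FC.levelRegion_isConnected (hn : 2 ≤ n) (hq : 1 ≤ q) (hpq : q < p)
    (hmod : p % 2 = q % 2) : ∀ l, IsConnected (levelRegion n p q l) := by
  intro l
  induction l with
  | zero =>
    constructor
    · exact ⟨WithLp.toLp 2 (fun _ => 0), FC.corner_mem_levelRegion hn hq hpq hmod 0 _ fun i => Or.inl rfl⟩
    · have hconv : Convex ℝ (levelRegion n p q 0) := by
        intro x hx y hy a b ha hb hab i
        have : (a • x + b • y) i = a * x i + b * y i := rfl
        rw [this]
        exact (convex_Icc (0 : ℝ) 1) (hx i) (hy i) ha hb hab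
      exact hconv.isPreconnected
  | succ l ih =>
    simp only [levelRegion]
    refine IsConnected.biUnion_of_reflTransGen
      ⟨(fun _ => 0), FC.zero_mem_digitSet hn hq hpq hmod⟩
      (fun a _ => ih.image _ (FC.simMap_continuous n p a).continuousOn) ?_
    intro a ha b hb
    have hmono : ∀ c d : Fin n → ℕ, FC.adj n p q c d →
        ((simMap n p c '' levelRegion n p q l ∩ simMap n p d '' levelRegion n p q l).Nonempty
          ∧ c ∈ digitSet n p q) := by
      intro c d hcd
      exact ⟨FC.adj_inter hn hq hpq hmod l hcd, hcd.1⟩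
    have h1 := FC.chain_to_zero hn hq hpq hmod (∑ i, a i) a le_rfl ha
    have h2 := FC.chain_to_zero hn hq hpq hmod (∑ i, b i) b le_rfl hb
    haveI : Std.Symm (FC.adj n p q) := ⟨fun x y h => FC.adj_symm h⟩
    have h2' := Std.Symm.symm _ _ h2
    exact ReflTransGen.mono hmono _ _ (h1.trans h2')

/-- The intersection of a nested sequence of compact connected sets in a T2 space
is connected. -/
lemma FC.isConnected_iInter_nested {X : Type*} [TopologicalSpace X] [T2Space X] {K : ℕ → Set X}
    (hanti : ∀ l, K (l + 1) ⊆ K l) (hcomp : ∀ l, IsCompact (K l))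
    (hconn : ∀ l, IsConnected (K l)) : IsConnected (⋂ l, K l) := by
  have hAnti : Antitone K := antitone_nat_of_succ_le hanti
  have hclosed : ∀ l, IsClosed (K l) := fun l => (hcomp l).isClosed
  have hdir : Directed (· ⊇ ·) K := hAnti.directed_ge
  have hne : (⋂ l, K l).Nonempty :=
    IsCompact.nonempty_iInter_of_directed_nonempty_isCompact_isClosed K hdir
      (fun l => (hconn l).nonempty) hcomp hclosed
  refine ⟨hne, ?_⟩
  set S := ⋂ l, K l with hS_def
  have hScomp : IsCompact S :=
    (hcomp 0).of_isClosed_subset (isClosed_iInter hclosed) (iInter_subset _ 0)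
  rintro u v hu hv hsub ⟨x, hxS, hxu⟩ ⟨y, hyS, hyv⟩
  by_contra hvoid
  rw [Set.not_nonempty_iff_eq_empty] at hvoid
  set A := S \ v with hA_def
  set B := S \ u with hB_def
  have hAcomp : IsCompact A := hScomp.diff hv
  have hBcomp : IsCompact B := hScomp.diff hu
  have hABdisj : Disjoint A B := by
    rw [Set.disjoint_left]
    rintro z ⟨hzS, hzv⟩ ⟨_, hzu⟩
    rcases hsub hzS with h | h
    · exact hzu h
    · exact hzv h
  obtain ⟨u', v', hu', hv', hAu', hBv', hdisj'⟩ :=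
    SeparatedNhds.of_isCompact_isCompact hAcomp hBcomp hABdisj
  have hScover : S ⊆ u' ∪ v' := by
    intro z hz
    by_cases hzv : z ∈ v
    · have hzu : z ∉ u := by
        intro hzu
        have : z ∈ S ∩ (u ∩ v) := ⟨hz, hzu, hzv⟩
        rw [hvoid] at this
        exact this
      exact Or.inr (hBv' ⟨hz, hzu⟩)
    · exact Or.inl (hAu' ⟨hz, hzv⟩)
  have hex : ∃ l, K l ⊆ u' ∪ v' := by
    by_contra h
    push_neg at h
    have hne2 : (⋂ l, K l \ (u' ∪ v')).Nonempty := by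
      refine IsCompact.nonempty_iInter_of_directed_nonempty_isCompact_isClosed _
        ?_ ?_ (fun l => (hcomp l).diff (hu'.union hv'))
        (fun l => (hclosed l).sdiff (hu'.union hv'))
      · intro l₁ l₂
        refine ⟨max l₁ l₂, ?_, ?_⟩
        · exact Set.diff_subset_diff_left (hAnti (le_max_left _ _))
        · exact Set.diff_subset_diff_left (hAnti (le_max_right _ _))
      · intro l
        obtain ⟨z, hz1, hz2⟩ := Set.not_subset.mp (h l)
        exact ⟨z, hz1, hz2⟩
    obtain ⟨z, hz⟩ := hne2
    rw [Set.mem_iInter] at hz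
    have hzS : z ∈ S := Set.mem_iInter.mpr fun l => (hz l).1
    exact (hz 0).2 (hScover hzS)
  obtain ⟨l, hl⟩ := hex
  have hxA : x ∈ A := by
    refine ⟨hxS, fun hxv => ?_⟩
    have : x ∈ S ∩ (u ∩ v) := ⟨hxS, hxu, hxv⟩
    rw [hvoid] at this
    exact this
  have hyB : y ∈ B := by
    refine ⟨hyS, fun hyu => ?_⟩
    have : y ∈ S ∩ (u ∩ v) := ⟨hyS, hyu, hyv⟩
    rw [hvoid] at this
    exact this
  have hx' : x ∈ K l ∩ u' := ⟨iInter_subset K l hxS, hAu' hxA⟩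
  have hy' : y ∈ K l ∩ v' := ⟨iInter_subset K l hyS, hBv' hyB⟩
  obtain ⟨z, _, hzu', hzv'⟩ := (hconn l).isPreconnected u' v' hu' hv' hl ⟨x, hx'⟩ ⟨y, hy'⟩
  exact Set.disjoint_left.mp hdisj' hzu' hzv'

end Aux

/-- For all integers `n ≥ 2` and `p > q ≥ 1` with `p ≡ q (mod 2)`,
the fractal cube `FC⁽ⁿ⁾(p,q) ⊆ ℝⁿ` is a connected set. -/
theorem fractalCube_isConnected (n p q : ℕ) (hn : 2 ≤ n) (hq : 1 ≤ q) (hpq : q < p)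
    (hmod : p % 2 = q % 2) :
    IsConnected (fractalCube n p q) := by
  exact FC.isConnected_iInter_nested
    (fun l => FC.levelRegion_succ_subset hpq l)
    (fun l => FC.levelRegion_isCompact l)
    (fun l => FC.levelRegion_isConnected hn hq hpq hmod l)
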